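/- Consider the planar system x₁' = β₂x₁(1 - x₁ - δ₂x₂), x₂' = β₄[i(t) - x₂ - δ₄x₁x₂] with positive parameters and i continuous ρ-periodic with (1/ρ)∫₀^ρ i = 1. If a strictly positive ρ-periodic solution exists, then either δ₂ < 1, or both 1 ≤ δ₂ ≤ (1+δ₄)²/(4δ₄) and δ₄ > 1 hold. In particular no strictly positive ρ-periodic solution exists when δ₂ > (1+δ₄)²/(4δ₄). -/

import Mathlib

/-- Necessary parameter conditions for existence of a strictly positive ρ-periodic
solution of the reduced system: either δ₂ < 1, or 1 ≤ δ₂ ≤ (1+δ₄)²/(4δ₄) and δ₄ > 1.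
In particular no such solution exists when δ₂ > (1+δ₄)²/(4δ₄). -/
theorem reduced_system_periodic_necessary_conditions
    (β₂ β₄ δ₂ δ₄ ρ : ℝ)
    (hβ₂ : 0 < β₂) (hβ₄ : 0 < β₄) (hδ₂ : 0 < δ₂) (hδ₄ : 0 < δ₄) (hρ : 0 < ρ)
    (i : ℝ → ℝ) (hi : Continuous i) (hip : Function.Periodic i ρ)
    (hinn : ∀ t, 0 ≤ i t)
    (himean : (1 / ρ) * ∫ t in (0:ℝ)..ρ, i t = 1)
    (x₁ x₂ : ℝ → ℝ)
    (hpos : ∀ t, 0 < x₁ t ∧ 0 < x₂ t)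
    (hp₁ : Function.Periodic x₁ ρ) (hp₂ : Function.Periodic x₂ ρ)
    (hx₁ : ∀ t, HasDerivAt x₁ (β₂ * x₁ t * (1 - x₁ t - δ₂ * x₂ t)) t)
    (hx₂ : ∀ t, HasDerivAt x₂ (β₄ * (i t - x₂ t - δ₄ * x₁ t * x₂ t)) t) :
    δ₂ < 1 ∨ (1 ≤ δ₂ ∧ δ₂ ≤ (1 + δ₄) ^ 2 / (4 * δ₄) ∧ 1 < δ₄) := by
  have hx₁pos : ∀ t, 0 < x₁ t := fun t => (hpos t).1
  have hcx₁ : Continuous x₁ := by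
    rw [continuous_iff_continuousAt]; exact fun t => (hx₁ t).continuousAt
  have hcx₂ : Continuous x₂ := by
    rw [continuous_iff_continuousAt]; exact fun t => (hx₂ t).continuousAt
  set V : ℝ → ℝ := fun t =>
    -(δ₄ / β₂) * x₁ t + (δ₂ / β₄) * x₂ t - (1 / β₂) * Real.log (x₁ t) with hV
  have hVderiv : ∀ t, HasDerivAt V
      (δ₄ * (x₁ t) ^ 2 + (1 - δ₄) * x₁ t + δ₂ * i t - 1) t := by
    intro t
    have h1 := (hx₁ t).const_mul (-(δ₄ / β₂))
    have h2 := (hx₂ t).const_mul (δ₂ / β₄)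
    have h3 := ((hx₁ t).log (ne_of_gt (hx₁pos t))).const_mul (1 / β₂)
    have := (h1.add h2).sub h3
    refine this.congr_deriv ?_
    field_simp [hβ₂.ne', hβ₄.ne', (hx₁pos t).ne']
    ring
  -- the derivative is continuous, hence interval integrable
  set g : ℝ → ℝ := fun t => δ₄ * (x₁ t) ^ 2 + (1 - δ₄) * x₁ t with hg
  have hcg : Continuous g := by fun_prop
  have hcint : Continuous fun t => δ₄ * (x₁ t) ^ 2 + (1 - δ₄) * x₁ t + δ₂ * i t - 1 := by
    fun_prop
  have hint : (∫ t in (0:ℝ)..ρ,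
      (δ₄ * (x₁ t) ^ 2 + (1 - δ₄) * x₁ t + δ₂ * i t - 1)) = V ρ - V 0 := by
    exact intervalIntegral.integral_eq_sub_of_hasDerivAt
      (fun t _ => hVderiv t) (hcint.intervalIntegrable 0 ρ)
  have hVper : V ρ = V 0 := by
    have e1 : x₁ ρ = x₁ 0 := by simpa using hp₁ 0
    have e2 : x₂ ρ = x₂ 0 := by simpa using hp₂ 0
    simp [hV, e1, e2]
  have hiρ : (∫ t in (0:ℝ)..ρ, i t) = ρ := by
    field_simp at himean
    linarith [himean]
  have hgi : IntervalIntegrable g MeasureTheory.volume 0 ρ := hcg.intervalIntegrable 0 ρ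
  have hii : IntervalIntegrable i MeasureTheory.volume 0 ρ := hi.intervalIntegrable 0 ρ
  have hgint : (∫ t in (0:ℝ)..ρ, g t) = ρ * (1 - δ₂) := by
    have hsplit : (∫ t in (0:ℝ)..ρ,
        (δ₄ * (x₁ t) ^ 2 + (1 - δ₄) * x₁ t + δ₂ * i t - 1))
        = (∫ t in (0:ℝ)..ρ, g t) + δ₂ * (∫ t in (0:ℝ)..ρ, i t)
          - (∫ t in (0:ℝ)..ρ, (1:ℝ)) := by
      rw [← intervalIntegral.integral_const_mul, ← intervalIntegral.integral_add hgi
        (hii.const_mul δ₂), ← intervalIntegral.integral_sub (hgi.add (hii.const_mul δ₂))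
        (intervalIntegrable_const)]
    rw [hsplit, hiρ, hVper] at hint
    simp only [intervalIntegral.integral_const, smul_eq_mul, mul_one, sub_self] at hint
    linarith
  -- pointwise lower bound for g
  have hglb : ∀ t, -((δ₄ - 1) ^ 2 / (4 * δ₄)) ≤ g t := by
    intro t
    have hx := hx₁pos t
    have hgt : g t = δ₄ * (x₁ t) ^ 2 + (1 - δ₄) * x₁ t := rfl
    rw [hgt, neg_le, le_div_iff₀ (by positivity : (0:ℝ) < 4 * δ₄)]
    nlinarith [sq_nonneg (2 * δ₄ * x₁ t - (δ₄ - 1))]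
  -- integral lower bound
  have hintlb : ρ * (-((δ₄ - 1) ^ 2 / (4 * δ₄))) ≤ ρ * (1 - δ₂) := by
    rw [← hgint]
    calc ρ * (-((δ₄ - 1) ^ 2 / (4 * δ₄)))
        = ∫ _ in (0:ℝ)..ρ, (-((δ₄ - 1) ^ 2 / (4 * δ₄))) := by
          rw [intervalIntegral.integral_const, smul_eq_mul]
          ring
      _ ≤ ∫ t in (0:ℝ)..ρ, g t := by
          apply intervalIntegral.integral_mono_on hρ.le intervalIntegrable_const hgi
          intro t _; exact hglb t
  have hδ₂le : δ₂ ≤ (1 + δ₄) ^ 2 / (4 * δ₄) := by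
    rw [le_div_iff₀ (by positivity : (0:ℝ) < 4 * δ₄)]
    have h := (mul_le_mul_iff_right₀ hρ).mp hintlb
    have h3 : δ₂ - 1 ≤ (δ₄ - 1) ^ 2 / (4 * δ₄) := by linarith
    rw [le_div_iff₀ (by positivity : (0:ℝ) < 4 * δ₄)] at h3
    nlinarith [h3]
  by_cases hcase : δ₂ < 1
  · exact Or.inl hcase
  · push_neg at hcase
    right
    refine ⟨hcase, hδ₂le, ?_⟩
    by_contra hδ₄le
    push_neg at hδ₄le
    -- δ₄ ≤ 1, so g t > 0 everywhere, integral positive, contradiction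
    have hgpos : ∀ t, 0 < g t := by
      intro t
      have hx := hx₁pos t
      have hgt : g t = δ₄ * (x₁ t) ^ 2 + (1 - δ₄) * x₁ t := rfl
      rw [hgt]
      nlinarith [mul_pos hδ₄ (pow_pos hx 2),
        mul_nonneg (by linarith : (0:ℝ) ≤ 1 - δ₄) hx.le]
    have : 0 < ∫ t in (0:ℝ)..ρ, g t := by
      apply intervalIntegral.intervalIntegral_pos_of_pos_on hgi
        (fun t _ => hgpos t) hρ
    rw [hgint] at this
    nlinarith
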